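/- Let v ∈ S¹ ⊂ ℝ² be a unit vector with nonzero first coordinate. Then for every ε > 0 there exists N ∈ ℕ such that for every n ∈ ℤ, there exist p ∈ {n, n+1, …, n+N} and a lattice point p⃗ ∈ ℤ² with |⟨p⃗, v⟩| ≤ ε and second coordinate pr₂(p⃗) = p. -/

import Mathlib

/-- Stepping lemma: if `0 < b`, then for any `s` there is `k ≤ 1/b + 1` with
`s + k*b` within `b` of an integer. -/
lemma step_lemma (b s : ℝ) (hb : 0 < b) :
    ∃ k : ℕ, (k : ℝ) ≤ 1 / b + 1 ∧ ∃ m : ℤ, |s + k * b - m| ≤ b := by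
  have hne : ∃ k : ℕ, 1 ≤ Int.fract s + k * b := by
    refine ⟨⌈1 / b⌉₊, ?_⟩
    have h1 : (1 : ℝ) / b ≤ (⌈1 / b⌉₊ : ℝ) := Nat.le_ceil _
    have : (1 : ℝ) ≤ (⌈1 / b⌉₊ : ℝ) * b := by
      rw [← div_le_iff₀ hb] at *
      linarith
    have := Int.fract_nonneg s
    linarith
  classical
  let k := Nat.find hne
  have hk : 1 ≤ Int.fract s + k * b := Nat.find_spec hne
  have hk1 : 1 ≤ k := by
    by_contra h
    have : k = 0 := by omega
    rw [this] at hk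
    simp at hk
    have := Int.fract_lt_one s
    linarith
  have hklt : Int.fract s + (k - 1 : ℕ) * b < 1 := by
    have := Nat.find_min hne (m := k - 1) (by omega)
    push_neg at this
    exact this
  have hcast : ((k - 1 : ℕ) : ℝ) = (k : ℝ) - 1 := by
    push_cast [Nat.cast_sub hk1]; ring
  rw [hcast] at hklt
  refine ⟨k, ?_, ⌊s⌋ + 1, ?_⟩
  · -- k ≤ 1/b + 1
    have hkb : ((k : ℝ) - 1) * b < 1 := by
      have := Int.fract_nonneg s
      nlinarith
    have : (k : ℝ) - 1 < 1 / b := by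
      rw [lt_div_iff₀ hb]; linarith
    linarith
  · have hs : (⌊s⌋ : ℝ) + Int.fract s = s := Int.floor_add_fract s
    rw [abs_le]
    push_cast
    constructor <;> nlinarith

theorem lattice_points_near_line_bounded_gaps
    (v : ℝ × ℝ) (hunit : v.1 ^ 2 + v.2 ^ 2 = 1) (hv1 : v.1 ≠ 0) :
    ∀ ε : ℝ, 0 < ε → ∃ N : ℕ, ∀ n : ℤ, ∃ p : ℤ, n ≤ p ∧ p ≤ n + N ∧
      ∃ a : ℤ, |(a : ℝ) * v.1 + (p : ℝ) * v.2| ≤ ε := by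
  intro ε hε
  set α : ℝ := v.2 / v.1 with hα
  have hv1' : 0 < |v.1| := abs_pos.mpr hv1
  set δ : ℝ := ε / |v.1| with hδdef
  have hδ : 0 < δ := div_pos hε hv1'
  -- it suffices to bound |a + p * α| by δ
  have key : ∀ a p : ℤ, |(a : ℝ) + p * α| ≤ δ → |(a : ℝ) * v.1 + (p : ℝ) * v.2| ≤ ε := by
    intro a p h
    have : (a : ℝ) * v.1 + (p : ℝ) * v.2 = v.1 * ((a : ℝ) + p * α) := by
      rw [hα]; field_simp; try ring
    rw [this, abs_mul]
    calc |v.1| * |(a : ℝ) + p * α| ≤ |v.1| * δ := by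
          exact mul_le_mul_of_nonneg_left h (abs_nonneg _)
      _ = ε := by rw [hδdef]; field_simp [hv1'.ne']
  -- Dirichlet
  set n₀ : ℕ := max 1 ⌈1 / δ⌉₊ with hn₀
  have hn₀pos : 0 < n₀ := lt_of_lt_of_le one_pos (le_max_left _ _)
  obtain ⟨m, q, hq0, hqn, hqm⟩ := Real.exists_int_int_abs_mul_sub_le α hn₀pos
  have hdir : |(q : ℝ) * α - m| ≤ δ := by
    refine hqm.trans ?_
    have h1 : 1 / δ ≤ (n₀ : ℝ) := by
      calc (1:ℝ)/δ ≤ (⌈1/δ⌉₊ : ℝ) := Nat.le_ceil _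
        _ ≤ n₀ := by exact_mod_cast Nat.cast_le.mpr (le_max_right _ _)
    rw [div_le_iff₀ (by positivity)]
    rw [div_le_iff₀ hδ] at h1
    nlinarith
  set β : ℝ := (q : ℝ) * α - m with hβ
  set K : ℕ := ⌈1 / |β| + 1⌉₊ with hK
  have hK1 : 1 ≤ K := Nat.ceil_pos.mpr (by positivity)
  refine ⟨n₀ * K, fun n => ?_⟩
  have hqR : (0:ℝ) < q := by exact_mod_cast hq0
  by_cases hβ0 : β = 0
  · -- rational case
    set r : ℤ := (-n) % q with hr
    have hr0 : 0 ≤ r := Int.emod_nonneg _ (by omega)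
    have hrq : r < q := Int.emod_lt_of_pos _ hq0
    set c : ℤ := -((-n) / q) with hc
    have hp : q * c = n + r := by
      have := Int.emod_def (-n) q
      rw [hr, this, hc]; ring
    refine ⟨q * c, by omega, ?_, -(c * m), ?_⟩
    · have h1 : q ≤ (n₀ : ℤ) := hqn
      have h2 : ((n₀ : ℕ) : ℤ) ≤ ((n₀ * K : ℕ) : ℤ) := by
        exact_mod_cast Nat.le_mul_of_pos_right n₀ (by omega)
      omega
    · apply key
      have : ((-(c * m) : ℤ) : ℝ) + (q * c : ℤ) * α = c * β := by
        push_cast [hβ]; ring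
      rw [this, hβ0, mul_zero, abs_zero]
      exact le_of_lt hδ
  · -- irrational-step case
    have hβpos : 0 < |β| := abs_pos.mpr hβ0
    have hβδ : |β| ≤ δ := hdir
    obtain ⟨k, hkle, m', hm'⟩ :
        ∃ k : ℕ, (k : ℝ) ≤ 1 / |β| + 1 ∧ ∃ m' : ℤ, |(if 0 < β then (n:ℝ)*α else -((n:ℝ)*α)) + k * |β| - m'| ≤ |β| := by
      exact step_lemma |β| _ hβpos
    have hkK : k ≤ K := by
      have := hkle.trans (Nat.le_ceil _)
      exact_mod_cast this
    have hkq0 : (0:ℤ) ≤ (k:ℤ) * q := mul_nonneg (by positivity) (le_of_lt hq0)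
    refine ⟨n + k * q, by omega, ?_, ?_⟩
    · have h1 : (k:ℤ) * q ≤ ((n₀ * K : ℕ) : ℤ) := by
        push_cast
        calc (k:ℤ) * q ≤ (K:ℤ) * (n₀:ℤ) :=
              mul_le_mul (by exact_mod_cast hkK) hqn (le_of_lt hq0) (by positivity)
          _ = (n₀:ℤ) * (K:ℤ) := mul_comm _ _
      omega
    · by_cases hsgn : 0 < β
      · refine ⟨-(k * m) - m', key _ _ ?_⟩
        rw [if_pos hsgn] at hm'
        rw [abs_of_pos hsgn] at hm'
        have : ((-(k * m) - m' : ℤ) : ℝ) + ((n + k * q : ℤ) : ℝ) * α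
            = (n:ℝ)*α + k * β - m' := by push_cast [hβ]; ring
        rw [this]
        exact hm'.trans ((le_abs_self β).trans hβδ)
      · have hneg : β < 0 := lt_of_le_of_ne (not_lt.mp hsgn) hβ0
        refine ⟨m' - k * m, key _ _ ?_⟩
        rw [if_neg hsgn] at hm'
        rw [abs_of_neg hneg] at hm'
        have : ((m' - k * m : ℤ) : ℝ) + ((n + k * q : ℤ) : ℝ) * α
            = -(-((n:ℝ)*α) + k * (-β) - m') := by push_cast [hβ]; ring
        rw [this, abs_neg]
        exact hm'.trans ((neg_le_abs β).trans hβδ)
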